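/- Let f = I·F ∈ G_B^I with F ∈ G_B^{inv}. Then the S-transform S_f, defined by f^{∘−1} = I · S_f, is the unique solution g ∈ G_B^{inv} of the fixed point equation g = (F ∘ (I·g))^{−1}, where the inverse on the right-hand side is the multiplicative inverse in (Mult[[B]], ·). -/

import Mathlib

universe u

/-- A (formal) series of `n`-ary functions on `B` (the carrier of `Mult[[B]]`). -/
def MSeries (B : Type u) : Type u := ∀ n : ℕ, (Fin n → B) → B

namespace MSeries

variable {B : Type u} [Ring B]

/-- The multiplication `(f · g)_n(x₁,…,xₙ) = ∑ₖ f_k(x₁,…,x_k) g_{n-k}(x_{k+1},…,xₙ)`. -/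
def mul (f g : MSeries B) : MSeries B := fun n x =>
  ∑ k : Fin (n + 1),
    f k.1 (fun i => x (Fin.castLE (Nat.lt_succ_iff.mp k.isLt) i)) *
      g (n - k.1) (fun i => x ⟨k.1 + i.1, by have h1 := k.isLt; have h2 := i.isLt; omega⟩)

/-- The composition `(f ∘ g)_n(x₁,…,xₙ)
  = ∑_{n = k₁ + ⋯ + k_l, kᵢ ≥ 1} f_l(g_{k₁}(x₁,…), …, g_{k_l}(…,xₙ))`. -/
def comp (f g : MSeries B) : MSeries B := fun n x =>
  ∑ c : Composition n,
    f c.length (fun i => g (c.blocksFun i) (fun j => x (c.embedding i j)))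

/-- The compositional identity `I = (δ_{n,1} Id)`. -/
def idS : MSeries B := fun n =>
  match n with
  | 1 => fun x => x 0
  | _ => fun _ => 0

/-- The multiplicative unit `1 = (δ_{n,0} 1)`. -/
def oneS : MSeries B := fun n _ => if n = 0 then 1 else 0

end MSeries

/-- `f` is a series of `K`-multilinear functions, i.e. `f ∈ Mult[[B]]`. -/
def IsMultSeries (K : Type u) [Field K] {B : Type u} [Ring B] [Algebra K B]
    (f : MSeries B) : Prop :=
  ∀ n, ∃ F : MultilinearMap K (fun _ : Fin n => B) B, ∀ x, f n x = F x

namespace MAux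
open MSeries

variable {B : Type u} [Ring B]

lemma apply_congr (f : MSeries B) {a b : ℕ} (hab : a = b) {x : Fin a → B} {y : Fin b → B}
    (hxy : ∀ (i : Fin a) (j : Fin b), i.1 = j.1 → x i = y j) : f a x = f b y := by
  subst hab
  have : x = y := funext fun i => hxy i i rfl
  rw [this]

lemma x_congr {n : ℕ} (x : Fin n → B) {i j : Fin n} (h : i.1 = j.1) : x i = x j :=
  congrArg x (Fin.ext h)

lemma idS_zero (x : Fin 0 → B) : idS 0 x = 0 := rfl

lemma idS_ne_one {n : ℕ} (hn : n ≠ 1) (x : Fin n → B) : idS n x = 0 := by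
  match n, hn with
  | 0, _ => rfl
  | (m+2), _ => rfl

lemma mul_idS_zero (A : MSeries B) (x : Fin 0 → B) : (idS.mul A) 0 x = 0 := by
  simp [mul, idS]

lemma mul_idS_succ (A : MSeries B) (n : ℕ) (x : Fin (n+1) → B) :
    (idS.mul A) (n+1) x = x 0 * A n (fun i => x i.succ) := by
  show (∑ k : Fin (n + 2), idS k.1 _ * A _ _) = _
  rw [Finset.sum_eq_single (1 : Fin (n+2))]
  · simp only [Fin.val_one]
    show (fun i => x (Fin.castLE _ i)) 0 * A (n + 1 - 1) _ = _
    congr 1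
    exact apply_congr A (by omega) (fun i j hij => x_congr x (by simp only [Fin.val_succ]; omega))
  · intro k _ hk
    have : (k : ℕ) ≠ 1 := fun h => hk (Fin.ext h)
    rw [idS_ne_one this, zero_mul]
  · intro h
    exact absurd (Finset.mem_univ _) h

lemma cancel_idS {A C : MSeries B} (hAC : idS.mul A = idS.mul C) : A = C := by
  funext n x
  have := congrFun (congrFun hAC (n+1)) (Fin.cons 1 x)
  rw [mul_idS_succ, mul_idS_succ] at this
  simpa [Fin.cons_succ] using this

lemma idS_eq_mul_one : (idS : MSeries B) = idS.mul oneS := by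
  funext n x
  match n with
  | 0 => rw [mul_idS_zero]; rfl
  | 1 => rw [mul_idS_succ]; simp [oneS, idS]
  | (m+2) => rw [mul_idS_succ]; simp [oneS, idS_ne_one]

end MAux

namespace MAux
open MSeries
variable {B : Type u} [Ring B]

lemma mul_idS_shift (A C : MSeries B) : (idS.mul A).mul C = idS.mul (A.mul C) := by
  funext n x
  match n with
  | 0 =>
    rw [mul_idS_zero]
    show (∑ k : Fin 1, (idS.mul A) k.1 _ * C _ _) = 0
    rw [Fin.sum_univ_one]
    simp only [Fin.val_zero]
    rw [mul_idS_zero, zero_mul]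
  | (m+1) =>
    rw [mul_idS_succ]
    show (∑ k : Fin (m+2), (idS.mul A) k.1 _ * C _ _) = _
    rw [Fin.sum_univ_succ]
    simp only [Fin.val_zero, Fin.val_succ]
    rw [mul_idS_zero, zero_mul, zero_add]
    show _ = x 0 * ∑ j : Fin (m+1), A j.1 _ * C _ _
    rw [Finset.mul_sum]
    refine Finset.sum_congr rfl fun k _ => ?_
    rw [mul_idS_succ, mul_assoc]
    congr 1
    congr 1
    exact apply_congr C (by omega) (fun i j hij => by
      refine x_congr x ?_
      simp only [Fin.val_succ]
      omega)

lemma mul_oneS (A : MSeries B) : A.mul oneS = A := by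
  funext n x
  show (∑ k : Fin (n+1), A k.1 _ * oneS _ _) = _
  rw [Finset.sum_eq_single (Fin.last n)]
  · simp only [Fin.val_last]
    have : oneS (n - n) (fun i : Fin (n-n) => x ⟨n + i.1, by omega⟩) = 1 := by
      simp [oneS]
    rw [this, mul_one]
    exact apply_congr A rfl (fun i j hij => x_congr x (by simpa using hij))
  · intro k _ hk
    have : n - k.1 ≠ 0 := by
      have : k.1 < n := by
        rcases lt_or_eq_of_le (Nat.lt_succ_iff.mp k.isLt) with h | h
        · exact h
        · exact absurd (Fin.ext (by simp [h])) hk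
      omega
    simp [oneS, this]
  · intro h; exact absurd (Finset.mem_univ _) h

lemma oneS_mul (A : MSeries B) : oneS.mul A = A := by
  funext n x
  show (∑ k : Fin (n+1), oneS k.1 _ * A _ _) = _
  rw [Finset.sum_eq_single (0 : Fin (n+1))]
  · simp only [Fin.val_zero]
    have : oneS 0 (fun i : Fin 0 => x (Fin.castLE (by omega) i)) = 1 := by simp [oneS]
    rw [this, one_mul]
    exact apply_congr A (by omega) (fun i j hij => x_congr x (by simpa using hij))
  · intro k _ hk
    have : k.1 ≠ 0 := fun h => hk (Fin.ext (by simpa using h))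
    simp [oneS, this]
  · intro h; exact absurd (Finset.mem_univ _) h

end MAux

namespace MAux
open MSeries
variable {B : Type u} [Ring B]

def triEquiv (n : ℕ) : (Σ j : Fin (n+1), Fin (j.1+1)) ≃ (Σ k : Fin (n+1), Fin (n - k.1 + 1)) where
  toFun p := ⟨⟨p.2.1, by have := p.1.isLt; have := p.2.isLt; omega⟩,
              ⟨p.1.1 - p.2.1, by
                show p.1.1 - p.2.1 < n - p.2.1 + 1
                have := p.1.isLt; have := p.2.isLt; omega⟩⟩
  invFun q := ⟨⟨q.1.1 + q.2.1, by have := q.1.isLt; have := q.2.isLt; omega⟩,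
              ⟨q.1.1, by show q.1.1 < q.1.1 + q.2.1 + 1; omega⟩⟩
  left_inv p := by
    rcases p with ⟨⟨a, ha⟩, ⟨b, hb⟩⟩
    have hb' : b < a + 1 := hb
    refine Sigma.ext (Fin.ext ?_) ((Fin.heq_ext_iff ?_).2 ?_) <;>
      simp only [Fin.val_mk] <;> omega
  right_inv q := by
    rcases q with ⟨⟨a, ha⟩, ⟨b, hb⟩⟩
    have hb' : b < n - a + 1 := hb
    refine Sigma.ext (Fin.ext ?_) ((Fin.heq_ext_iff ?_).2 ?_) <;>
      simp only [Fin.val_mk] <;> omega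

lemma mul_assoc' (f g h : MSeries B) : (f.mul g).mul h = f.mul (g.mul h) := by
  funext n x
  show mul (mul f g) h n x = mul f (mul g h) n x
  simp only [mul, Finset.sum_mul, Finset.mul_sum]
  rw [Finset.sum_sigma', Finset.sum_sigma']
  rw [Finset.univ_sigma_univ, Finset.univ_sigma_univ]
  refine Fintype.sum_equiv (triEquiv n) _ _ (fun p => ?_)
  rcases p with ⟨⟨a, ha⟩, ⟨b, hb⟩⟩
  have hb' : b < a + 1 := hb
  dsimp [triEquiv]
  rw [mul_assoc]
  congr 1
  congr 1
  exact apply_congr h (by omega) (fun i j hij => x_congr x (by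
    simp only [Fin.val_mk] at hij ⊢; omega))

end MAux

namespace MAux
open MSeries
variable {B : Type u} [Ring B]

/-- Recursive construction of a left inverse for the multiplication `mul`,
for a series whose constant term is the unit `u`. -/
def leftInv (S : MSeries B) (u : Bˣ) : (n : ℕ) → (Fin n → B) → B
  | 0 => fun _ => (↑u⁻¹ : B)
  | (n+1) => fun x =>
      -(∑ k : Fin (n+1),
          leftInv S u k.1 (fun i => x (Fin.castLE (Nat.lt_succ_iff.mp (k.isLt.trans (Nat.lt_succ_self _))) i)) *
            S (n + 1 - k.1) (fun i => x ⟨k.1 + i.1, by have h1 := k.isLt; have h2 := i.isLt; omega⟩)) * (↑u⁻¹ : B)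
  termination_by n => n
  decreasing_by exact k.isLt

lemma leftInv_mul (S : MSeries B) (u : Bˣ) (hu : (↑u : B) = S 0 (fun i => i.elim0)) :
    mul (leftInv S u) S = oneS := by
  funext n x
  match n with
  | 0 =>
    show (∑ k : Fin 1, leftInv S u k.1 _ * S _ _) = oneS 0 x
    rw [Fin.sum_univ_one]
    simp only [Fin.val_zero]
    have h0 : S (0 - 0) (fun i : Fin (0-0) => x ⟨0 + i.1, by omega⟩) = S 0 (fun i => i.elim0) := by
      exact apply_congr S rfl (fun i j _ => i.elim0)
    rw [h0, leftInv, ← hu, Units.inv_mul]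
    rfl
  | (m+1) =>
    show (∑ k : Fin (m+2), leftInv S u k.1 _ * S _ _) = oneS (m+1) x
    rw [Fin.sum_univ_castSucc]
    simp only [Fin.coe_castSucc, Fin.val_last]
    have h0 : S (m + 1 - (m+1)) (fun i : Fin (m+1-(m+1)) => x ⟨m + 1 + i.1, by omega⟩)
        = S 0 (fun i => i.elim0) := by
      exact apply_congr S (by omega) (fun i j _ => absurd i.isLt (by omega))
    have hx : (fun i : Fin (m+1) => x (Fin.castLE (Nat.lt_succ_iff.mp (Fin.last (m+1)).isLt) i)) = x := by
      funext i; exact x_congr x (by simp)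
    rw [h0, hx, ← hu]
    show _ + leftInv S u (m+1) x * ↑u = oneS (m+1) x
    simp only [leftInv]
    rw [neg_mul, neg_mul, mul_assoc, Units.inv_mul, mul_one]
    have : oneS (m+1) x = 0 := by simp [oneS]
    rw [this, add_neg_eq_zero]

end MAux

namespace MAux
open MSeries
variable {B : Type u} [Ring B]

lemma comp_blocks_nil (c : Composition 0) : c.blocks = [] := by
  cases hb : c.blocks with
  | nil => rfl
  | cons a l =>
    have hp := c.blocks_pos (hb ▸ (List.mem_cons_self : a ∈ a :: l))
    have hs := c.blocks_sum
    rw [hb] at hs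
    simp at hs
    omega

instance : Unique (Composition 0) where
  default := ⟨[], by simp, rfl⟩
  uniq c := by
    ext1
    rw [comp_blocks_nil c]

lemma comp_zero (A C : MSeries B) (y : Fin 0 → B) :
    comp A C 0 y = A 0 (fun i => i.elim0) := by
  show (∑ c : Composition 0, A c.length _) = _
  rw [Finset.univ_unique, Finset.sum_singleton]
  exact apply_congr A rfl (fun i j _ => i.elim0)

/-- Splitting off the first block of a composition of `n+1`. -/
def splitE (n : ℕ) : Composition (n+1) ≃ Σ k : Fin (n+1), Composition (n + 1 - (k.1 + 1)) where
  toFun c := by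
    have hne : c.blocks ≠ [] := by
      intro hh
      have := c.blocks_sum
      rw [hh] at this
      simp at this
    have hmem : c.blocks.head! ∈ c.blocks := List.head!_mem_self hne
    have hpos : 0 < c.blocks.head! := c.blocks_pos hmem
    have hsum : c.blocks.head! + c.blocks.tail.sum = n + 1 := by
      have := c.blocks_sum
      conv_lhs at this => rw [← List.cons_head!_tail hne]
      rw [List.sum_cons] at this
      exact this
    exact ⟨⟨c.blocks.head! - 1, by omega⟩,
      ⟨c.blocks.tail, fun hi => c.blocks_pos (List.mem_of_mem_tail hi), by
        show c.blocks.tail.sum = n + 1 - (c.blocks.head! - 1 + 1)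
        omega⟩⟩
  invFun p := ⟨(p.1.1 + 1) :: p.2.blocks, by
      intro i hi
      rcases List.mem_cons.1 hi with h | h
      · omega
      · exact p.2.blocks_pos h, by
      rw [List.sum_cons, p.2.blocks_sum]
      have := p.1.isLt
      omega⟩
  left_inv c := by
    have hne : c.blocks ≠ [] := by
      intro hh
      have := c.blocks_sum
      rw [hh] at this
      simp at this
    have hpos : 0 < c.blocks.head! := c.blocks_pos (List.head!_mem_self hne)
    ext1
    show (c.blocks.head! - 1 + 1) :: c.blocks.tail = c.blocks
    rw [Nat.sub_add_cancel hpos]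
    exact List.cons_head!_tail hne
  right_inv p := rfl

end MAux

namespace MAux
open MSeries
variable {B : Type u} [Ring B]

lemma idS_mul_comp (F C : MSeries B) (h0 : ∀ y, C 0 y = 0) :
    comp (mul idS F) C = mul C (comp F C) := by
  funext n x
  match n with
  | 0 =>
    rw [comp_zero, mul_idS_zero]
    show (0:B) = ∑ k : Fin 1, C k.1 _ * comp F C _ _
    rw [Fin.sum_univ_one]
    simp only [Fin.val_zero]
    rw [h0, zero_mul]
  | (m+1) =>
    show (∑ c : Composition (m+1), (mul idS F) c.length
        (fun i => C (c.blocksFun i) (fun j => x (c.embedding i j))))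
      = ∑ k : Fin (m+2), C k.1 _ * comp F C _ _
    rw [Fin.sum_univ_succ]
    simp only [Fin.val_zero, Fin.val_succ]
    rw [h0, zero_mul, zero_add]
    rw [← Equiv.sum_comp (splitE m).symm (fun c => (mul idS F) c.length
        (fun i => C (c.blocksFun i) (fun j => x (c.embedding i j))))]
    rw [← Finset.univ_sigma_univ, Finset.sum_sigma]
    refine Finset.sum_congr rfl fun k _ => ?_
    simp only [comp]
    rw [Finset.mul_sum]
    refine Finset.sum_congr rfl fun c' _ => ?_
    dsimp only [splitE, Equiv.symm, Equiv.coe_fn_mk, Composition.length, List.length_cons]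
    rw [mul_idS_succ]
    congr 1
    · refine apply_congr C (by rfl) (fun a b hab => x_congr x ?_)
      refine (Composition.coe_embedding _ _ _).trans ?_
      simp only [Composition.coe_embedding, Fin.coe_castLE, Composition.sizeUpTo_zero,
        Fin.val_zero, Composition.sizeUpTo]
      simp only [List.take_zero, List.sum_nil]
      omega
    · refine apply_congr F rfl (fun i j hij => ?_)
      have hji : i = j := Fin.ext hij
      subst hji
      refine apply_congr C (by rfl) (fun a b hab => x_congr x ?_)
      refine (Composition.coe_embedding _ _ _).trans ?_
      simp only [Composition.coe_embedding, Fin.val_succ, Fin.val_mk,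
        Composition.sizeUpTo, List.take_succ_cons, List.sum_cons]
      omega

lemma mul_idS_local {B : Type u} [Ring B] {g g' : MSeries B} {n : ℕ}
    (hg : ∀ m, m < n → g m = g' m) :
    ∀ b, b ≤ n → ∀ z : Fin b → B, (idS.mul g) b z = (idS.mul g') b z := by
  intro b hb z
  match b with
  | 0 => rw [mul_idS_zero, mul_idS_zero]
  | (b'+1) => rw [mul_idS_succ, mul_idS_succ, hg b' (by omega)]

lemma comp_local {B : Type u} [Ring B] (F : MSeries B) {g g' : MSeries B} {n : ℕ}
    (hg : ∀ m, m < n → g m = g' m) {m : ℕ} (hm : m ≤ n) (y : Fin m → B) :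
    comp F (mul idS g) m y = comp F (mul idS g') m y := by
  show (∑ c : Composition m, F c.length fun i => (mul idS g) (c.blocksFun i) fun j => y (c.embedding i j))
    = ∑ c : Composition m, F c.length fun i => (mul idS g') (c.blocksFun i) fun j => y (c.embedding i j)
  refine Finset.sum_congr rfl fun c _ => ?_
  refine apply_congr F rfl (fun i j hij => ?_)
  have hji : i = j := Fin.ext hij
  subst hji
  exact mul_idS_local hg _ (le_trans (Composition.blocksFun_le c i) hm) _

lemma mul_last {B : Type u} [Ring B] (A X : MSeries B) (n : ℕ) (x : Fin n → B) :
    mul A X n x = (∑ k : Fin n,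
        A k.1 (fun i => x (Fin.castLE (le_of_lt k.isLt) i)) *
          X (n - k.1) (fun i => x ⟨k.1 + i.1, by have := k.isLt; have := i.isLt; omega⟩)) +
      A n x * X 0 (fun i => i.elim0) := by
  show (∑ k : Fin (n+1), A k.1 (fun i => x (Fin.castLE (Nat.lt_succ_iff.mp k.isLt) i)) *
      X (n - k.1) (fun i => x ⟨k.1 + i.1, by have h1 := k.isLt; have h2 := i.isLt; omega⟩)) = _
  rw [Fin.sum_univ_castSucc]
  congr 1
  simp only [Fin.val_last]
  congr 1
  exact apply_congr X (by omega) (fun i j _ => absurd i.isLt (by omega))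

lemma unique_aux {B : Type u} [Ring B] (F g S : MSeries B)
    (hF0 : IsUnit (F 0 fun i => i.elim0))
    (hgEq : mul g (comp F (mul idS g)) = oneS)
    (hSEq : mul S (comp F (mul idS S)) = oneS) :
    g = S := by
  funext n
  induction n using Nat.strong_induction_on with
  | _ n ih =>
    funext x
    have h1 := congrFun (congrFun hgEq n) x
    have h2 := congrFun (congrFun hSEq n) x
    rw [mul_last] at h1 h2
    rw [comp_zero] at h1 h2
    have hsum : (∑ k : Fin n,
        g k.1 (fun i => x (Fin.castLE (le_of_lt k.isLt) i)) *
          comp F (mul idS g) (n - k.1) (fun i => x ⟨k.1 + i.1, by have := k.isLt; have := i.isLt; omega⟩))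
      = ∑ k : Fin n,
        S k.1 (fun i => x (Fin.castLE (le_of_lt k.isLt) i)) *
          comp F (mul idS S) (n - k.1) (fun i => x ⟨k.1 + i.1, by have := k.isLt; have := i.isLt; omega⟩) := by
      refine Finset.sum_congr rfl fun k _ => ?_
      rw [ih k.1 k.isLt]
      congr 1
      exact comp_local F (fun m hm => ih m hm) (by omega) _
    rw [hsum] at h1
    exact hF0.mul_right_cancel (add_left_cancel (h1.trans h2.symm))

end MAux

open MAux in
open MSeries in
/-- The S-transform `S_f` of `f = I·F ∈ G_B^I`, defined by `f^{∘-1} = I · S_f`, is the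
unique solution of the fixed point equation `S = (F ∘ (I·S))⁻¹` in `G_B^{inv}`. -/
theorem S_transform_fixed_point {K B : Type u} [Field K] [CharZero K] [Ring B] [Algebra K B]
    (F S h : MSeries B)
    (hF : IsMultSeries K F) (hF0 : IsUnit (F 0 fun i => i.elim0))
    (hS : IsMultSeries K S) (hS0 : IsUnit (S 0 fun i => i.elim0))
    (hinv1 : (idS.mul F).comp h = idS) (hinv2 : h.comp (idS.mul F) = idS)
    (hSdef : h = idS.mul S) :
    (S.mul (F.comp (idS.mul S)) = oneS ∧ (F.comp (idS.mul S)).mul S = oneS) ∧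
    ∀ g : MSeries B, IsMultSeries K g → IsUnit (g 0 fun i => i.elim0) →
      (g.mul (F.comp (idS.mul g)) = oneS ∧ (F.comp (idS.mul g)).mul g = oneS) →
      g = S := by
  subst hSdef
  rw [idS_mul_comp F (mul idS S) (fun y => mul_idS_zero S y), mul_idS_shift] at hinv1
  conv_rhs at hinv1 => rw [idS_eq_mul_one]
  have eq1 : S.mul (F.comp (idS.mul S)) = oneS := cancel_idS hinv1
  have hZ : mul (leftInv S hS0.unit) S = oneS := leftInv_mul S hS0.unit hS0.unit_spec
  have eq2 : (F.comp (idS.mul S)).mul S = oneS := by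
    have hZX : leftInv S hS0.unit = F.comp (idS.mul S) := by
      rw [← mul_oneS (leftInv S hS0.unit), ← eq1, ← mul_assoc' (leftInv S hS0.unit : MSeries B), hZ, oneS_mul]
    rw [← hZX, hZ]
  exact ⟨⟨eq1, eq2⟩, fun g _ _ hg => unique_aux F g S hF0 hg.1 eq1⟩
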